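/- Let e₁ = (1,0)^T, e₂ = (0,1)^T ∈ ℚ², and let A := 2 e₁⊗e₁⊗e₁ − 4 e₂⊗e₂⊗e₁ + 4 e₂⊗e₁⊗e₂ − 4 e₁⊗e₂⊗e₂ ∈ ℚ^{2×2×2}. Then the rank of A over ℝ is at most 2 (indeed A = z̄₁⊗z₂⊗z̄₃ + z₁⊗z̄₂⊗z₃ where z = e₁ + √2 e₂ and z̄ = e₁ − √2 e₂), while the rank of A over ℚ is strictly greater than 2: there are no rational vectors u_i, v_i ∈ ℚ² (i = 1,2,3) with A = u₁⊗u₂⊗u₃ + v₁⊗v₂⊗v₃. In particular, the rank over ℝ of a tensor with rational entries can be strictly less than its rank over ℚ. -/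

import Mathlib

/-- The rank over a field `F` of a 3-tensor `A ∈ F^{2×2×2}`: the least `r` such
that `A` is a sum of `r` outer products `x_α ⊗ y_α ⊗ z_α`. -/
noncomputable def tRank (F : Type*) [Field F] (A : Fin 2 → Fin 2 → Fin 2 → F) : ℕ :=
  sInf {r : ℕ | ∃ x y z : Fin r → Fin 2 → F,
    ∀ i j k, A i j k = ∑ α, x α i * y α j * z α k}

/-- The tensor `A = 2 e₁⊗e₁⊗e₁ − 4 e₂⊗e₂⊗e₁ + 4 e₂⊗e₁⊗e₂ − 4 e₁⊗e₂⊗e₂ ∈ ℚ^{2×2×2}`. -/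
noncomputable def Aten : Fin 2 → Fin 2 → Fin 2 → ℚ := fun i j k =>
  2 * ((![1, 0] : Fin 2 → ℚ) i * ![1, 0] j * ![1, 0] k)
    - 4 * ((![0, 1] : Fin 2 → ℚ) i * ![0, 1] j * ![1, 0] k)
    + 4 * ((![0, 1] : Fin 2 → ℚ) i * ![1, 0] j * ![0, 1] k)
    - 4 * ((![1, 0] : Fin 2 → ℚ) i * ![0, 1] j * ![0, 1] k)

/-- If `p² = 2q²` in `ℚ` then `q = 0` (irrationality of `√2`). -/
lemma sq_two_aux (p q : ℚ) (h : p^2 = 2*q^2) : q = 0 := by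
  by_contra hq
  have h2 : (p/q)^2 = 2 := by field_simp; linarith
  apply irrational_sqrt_two
  refine ⟨|p/q|, ?_⟩
  have h3 : ((|p/q| : ℚ) : ℝ)^2 = 2 := by
    push_cast
    rw [sq_abs]
    exact_mod_cast h2
  rw [show (2:ℝ) = ((|p/q| : ℚ) : ℝ)^2 from h3.symm, Real.sqrt_sq (by positivity)]

/-- `Aten` admits no rational decomposition as a sum of two outer products. -/
lemma no2_aux : ¬ ∃ u₁ u₂ u₃ v₁ v₂ v₃ : Fin 2 → ℚ, ∀ i j k,
    Aten i j k = u₁ i * u₂ j * u₃ k + v₁ i * v₂ j * v₃ k := by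
  rintro ⟨u₁, u₂, u₃, v₁, v₂, v₃, h⟩
  have h000 := h 0 0 0; have h100 := h 1 0 0; have h010 := h 0 1 0
  have h110 := h 1 1 0; have h001 := h 0 0 1; have h101 := h 1 0 1
  have h011 := h 0 1 1; have h111 := h 1 1 1
  norm_num [Aten] at h000 h100 h010 h110 h001 h101 h011 h111
  set a0 := u₁ 0; set a1 := u₁ 1; set b0 := u₂ 0; set b1 := u₂ 1
  set c0 := u₃ 0; set c1 := u₃ 1; set d0 := v₁ 0; set d1 := v₁ 1
  set e0 := v₂ 0; set e1 := v₂ 1; set f0 := v₃ 0; set f1 := v₃ 1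
  set D := c0*f1 - c1*f0 with hD
  -- f₁·A₀ − f₀·A₁ = D · u₁u₂ᵀ entrywise, hence its determinant vanishes
  have k1 : 2*f1 = a0*b0*D := by linear_combination f1*h000 - f0*h001
  have k2 : 4*f0 = a0*b1*D := by linear_combination f1*h010 - f0*h011
  have k3 : -(4*f0) = a1*b0*D := by linear_combination f1*h100 - f0*h101
  have k4 : -(4*f1) = a1*b1*D := by linear_combination f1*h110 - f0*h111
  have hf1 : f1^2 = 2*f0^2 := by
    linear_combination (f1/2)*k1 - (a0*b0*D/8)*k4 - (f0/2)*k2 + (a0*b1*D/8)*k3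
  have hf0 : f0 = 0 := sq_two_aux f1 f0 hf1
  -- c₁·A₀ − c₀·A₁ = −D · v₁v₂ᵀ entrywise, hence its determinant vanishes
  have l1 : 2*c1 = -(d0*e0*D) := by linear_combination c1*h000 - c0*h001
  have l2 : 4*c0 = -(d0*e1*D) := by linear_combination c1*h010 - c0*h011
  have l3 : -(4*c0) = -(d1*e0*D) := by linear_combination c1*h100 - c0*h101
  have l4 : -(4*c1) = -(d1*e1*D) := by linear_combination c1*h110 - c0*h111
  have hc1 : c1^2 = 2*c0^2 := by
    linear_combination (c1/2)*l1 + (d0*e0*D/8)*l4 - (c0/2)*l2 - (d0*e1*D/8)*l3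
  have hc0 : c0 = 0 := sq_two_aux c1 c0 hc1
  rw [hc0, hf0] at h000
  norm_num at h000

/-- the rank of `A` over `ℝ` is at most 2, while its rank over `ℚ`
is strictly greater than 2; in particular no rational vectors give
`A = u₁⊗u₂⊗u₃ + v₁⊗v₂⊗v₃`. -/
theorem stmt_18 :
    tRank ℝ (fun i j k => ((Aten i j k : ℚ) : ℝ)) ≤ 2 ∧
    2 < tRank ℚ Aten ∧
    ¬ ∃ u₁ u₂ u₃ v₁ v₂ v₃ : Fin 2 → ℚ, ∀ i j k,
      Aten i j k = u₁ i * u₂ j * u₃ k + v₁ i * v₂ j * v₃ k := by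
  refine ⟨?_, ?_, no2_aux⟩
  · -- rank over ℝ is at most 2, via z = e₁ + √2 e₂, z̄ = e₁ − √2 e₂
    apply Nat.sInf_le
    refine ⟨![![1, -Real.sqrt 2], ![1, Real.sqrt 2]],
            ![![1, Real.sqrt 2], ![1, -Real.sqrt 2]],
            ![![1, -Real.sqrt 2], ![1, Real.sqrt 2]], ?_⟩
    have hs : Real.sqrt 2 * Real.sqrt 2 = 2 := Real.mul_self_sqrt (by norm_num)
    intro i j k
    fin_cases i <;> fin_cases j <;> fin_cases k <;>
      norm_num [Aten, Fin.sum_univ_two] <;> linear_combination 2*hs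
  · -- rank over ℚ is greater than 2
    have hne : {r : ℕ | ∃ x y z : Fin r → Fin 2 → ℚ,
        ∀ i j k, Aten i j k = ∑ α, x α i * y α j * z α k}.Nonempty := by
      refine ⟨4, ![![2,0],![0,-4],![0,4],![-4,0]],
              ![![1,0],![0,1],![1,0],![0,1]],
              ![![1,0],![1,0],![0,1],![0,1]], ?_⟩
      intro i j k
      fin_cases i <;> fin_cases j <;> fin_cases k <;>
        norm_num [Aten, Fin.sum_univ_four, Matrix.vecHead, Matrix.vecTail, Matrix.cons_val_two, Matrix.cons_val_three]
    have key : ∀ r : ℕ, r ≤ 2 →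
        ¬ (∃ x y z : Fin r → Fin 2 → ℚ,
          ∀ i j k, Aten i j k = ∑ α, x α i * y α j * z α k) := by
      rintro r hr ⟨x, y, z, hd⟩
      interval_cases r
      · have := hd 0 0 0
        norm_num [Aten] at this
      · exact no2_aux ⟨x 0, y 0, z 0, 0, 0, 0, fun i j k => by
          simpa [Fin.sum_univ_one] using hd i j k⟩
      · exact no2_aux ⟨x 0, y 0, z 0, x 1, y 1, z 1, fun i j k => by
          simpa [Fin.sum_univ_two] using hd i j k⟩
    by_contra hle
    push_neg at hle
    exact key _ hle (Nat.sInf_mem hne)
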